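/- Let C = R + iB be a complex d×d matrix with (C ξ, ξ) ∈ Σ_θ for all ξ ∈ ℂ^d where θ ∈ [0, π/2), and with antisymmetric part B_a of B equal to zero. Then for all ξ ∈ ℂ^d: (a) (R_s ξ, ξ) ≥ 0; (b) (((tan θ) R_s ± B_s) ξ, ξ) ≥ 0; (c) ((2(tan θ) R_s ± i R_a) ξ, ξ) ≥ 0, where the left-hand sides in (b) and (c) are real. -/

import Mathlib

open Matrix

/-- The closed sector with vertex 0 and semi-angle θ in the complex plane. -/
def sector (θ : ℝ) : Set ℂ :=
  {z | ∃ r β : ℝ, 0 ≤ r ∧ |β| ≤ θ ∧ z = r * Complex.exp (β * Complex.I)}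

/-- Symmetric part of a real matrix. -/
noncomputable def symPart {d : ℕ} (M : Matrix (Fin d) (Fin d) ℝ) : Matrix (Fin d) (Fin d) ℝ :=
  (1 / 2 : ℝ) • (M + Mᵀ)

/-- Antisymmetric part of a real matrix. -/
noncomputable def antiPart {d : ℕ} (M : Matrix (Fin d) (Fin d) ℝ) : Matrix (Fin d) (Fin d) ℝ :=
  (1 / 2 : ℝ) • (M - Mᵀ)

lemma star_Q {d : ℕ} (M : Matrix (Fin d) (Fin d) ℝ) (ξ : Fin d → ℂ) :
    star ((M.map Complex.ofReal).mulVec ξ ⬝ᵥ star ξ) =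
    (Mᵀ.map Complex.ofReal).mulVec ξ ⬝ᵥ star ξ := by
  simp only [dotProduct, mulVec, Matrix.map_apply, Matrix.transpose_apply, Pi.star_apply,
    star_sum, star_mul', Finset.sum_mul, Finset.mul_sum, star_star]
  rw [Finset.sum_comm]
  refine Finset.sum_congr rfl fun k _ => Finset.sum_congr rfl fun l _ => ?_
  simp [Complex.star_def, Complex.conj_ofReal]
  ring

lemma Q_starVec {d : ℕ} (M : Matrix (Fin d) (Fin d) ℝ) (ξ : Fin d → ℂ) :
    (M.map Complex.ofReal).mulVec (star ξ) ⬝ᵥ star (star ξ) =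
    star ((M.map Complex.ofReal).mulVec ξ ⬝ᵥ star ξ) := by
  simp only [dotProduct, mulVec, Matrix.map_apply, Pi.star_apply, star_star,
    star_sum, star_mul', Finset.sum_mul, Finset.mul_sum]
  refine Finset.sum_congr rfl fun k _ => Finset.sum_congr rfl fun l _ => ?_
  simp [Complex.star_def, Complex.conj_ofReal]

lemma sector_bounds {θ : ℝ} (hθ : θ ∈ Set.Ico 0 (Real.pi / 2)) {z : ℂ} (hz : z ∈ sector θ) :
    0 ≤ z.re ∧ |z.im| ≤ Real.tan θ * z.re := by
  obtain ⟨r, β, hr, hβ, rfl⟩ := hz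
  obtain ⟨hθ0, hθπ⟩ := hθ
  have hβ2 : |β| < Real.pi / 2 := lt_of_le_of_lt hβ hθπ
  have hb1 := (abs_le.mp hβ2.le).1
  have hb2 := (abs_le.mp hβ2.le).2
  have hpi := Real.pi_pos
  have hcosβ : 0 ≤ Real.cos β := Real.cos_nonneg_of_mem_Icc ⟨by linarith, by linarith⟩
  have hcosθ : 0 < Real.cos θ := Real.cos_pos_of_mem_Ioo ⟨by linarith, hθπ⟩
  have hre : ((r : ℂ) * Complex.exp (β * Complex.I)).re = r * Real.cos β := by
    simp [Complex.mul_re, Complex.exp_ofReal_mul_I_re, Complex.exp_ofReal_mul_I_im]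
  have him : ((r : ℂ) * Complex.exp (β * Complex.I)).im = r * Real.sin β := by
    simp [Complex.mul_im, Complex.exp_ofReal_mul_I_re, Complex.exp_ofReal_mul_I_im]
  rw [hre, him]
  refine ⟨by positivity, ?_⟩
  have h3 : Real.sin |β| = |Real.sin β| := by
    rcases abs_cases β with ⟨h, hpos⟩ | ⟨h, hneg⟩
    · rw [h, abs_of_nonneg (Real.sin_nonneg_of_nonneg_of_le_pi hpos (by linarith))]
    · rw [h, Real.sin_neg, abs_of_nonpos
        (Real.sin_nonpos_of_nonpos_of_neg_pi_le hneg.le (by linarith))]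
  have key : |Real.sin β| * Real.cos θ ≤ Real.sin θ * Real.cos β := by
    have h1 : Real.sin (|β| - θ) ≤ 0 :=
      Real.sin_nonpos_of_nonpos_of_neg_pi_le (by linarith) (by linarith [abs_nonneg β])
    rw [Real.sin_sub, h3, Real.cos_abs] at h1
    linarith
  rw [abs_mul, abs_of_nonneg hr, Real.tan_eq_sin_div_cos, div_mul_eq_mul_div, le_div_iff₀ hcosθ]
  nlinarith [mul_le_mul_of_nonneg_left key hr]

theorem stmt_5 (d : ℕ) (θ : ℝ) (hθ : θ ∈ Set.Ico 0 (Real.pi / 2))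
    (C : Matrix (Fin d) (Fin d) ℂ) (R B : Matrix (Fin d) (Fin d) ℝ)
    (hRB : ∀ k l, C k l = (R k l : ℂ) + (B k l : ℂ) * Complex.I)
    (hsec : ∀ ξ : Fin d → ℂ, C.mulVec ξ ⬝ᵥ star ξ ∈ sector θ)
    (hBa : antiPart B = 0) :
    ∀ ξ : Fin d → ℂ,
      -- (a)
      (((symPart R).map Complex.ofReal).mulVec ξ ⬝ᵥ star ξ).im = 0 ∧
      0 ≤ (((symPart R).map Complex.ofReal).mulVec ξ ⬝ᵥ star ξ).re ∧
      -- (b)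
      (∀ s : ℝ, s = 1 ∨ s = -1 →
        ((((Real.tan θ • symPart R + s • symPart B).map Complex.ofReal).mulVec ξ
            ⬝ᵥ star ξ).im = 0 ∧
        0 ≤ (((Real.tan θ • symPart R + s • symPart B).map Complex.ofReal).mulVec ξ
            ⬝ᵥ star ξ).re)) ∧
      -- (c)
      (∀ s : ℝ, s = 1 ∨ s = -1 →
        ((((2 * Real.tan θ) • ((symPart R).map Complex.ofReal)
            + (s : ℂ) • Complex.I • ((antiPart R).map Complex.ofReal)).mulVec ξ
            ⬝ᵥ star ξ).im = 0 ∧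
        0 ≤ (((2 * Real.tan θ) • ((symPart R).map Complex.ofReal)
            + (s : ℂ) • Complex.I • ((antiPart R).map Complex.ofReal)).mulVec ξ
            ⬝ᵥ star ξ).re)) := by
  intro ξ
  -- basic transpose facts
  have hBT : Bᵀ = B := by
    have := congrArg (fun M => (2 : ℝ) • M) hBa
    simp [antiPart, smul_smul] at this
    ext k l
    have := congrFun (congrFun (sub_eq_zero.mp this) k) l
    exact this.symm
  have hBs : symPart B = B := by
    simp [symPart, hBT]
    ext k l; simp [Matrix.smul_apply, Matrix.add_apply]; ring
  have hRsT : (symPart R)ᵀ = symPart R := by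
    simp [symPart, Matrix.transpose_smul, Matrix.transpose_add, add_comm]
  have hRaT : (antiPart R)ᵀ = -antiPart R := by
    simp [antiPart, Matrix.transpose_smul, Matrix.transpose_sub]
    ext k l; simp [Matrix.smul_apply, Matrix.sub_apply, Matrix.neg_apply]; ring
  set q : ℂ := ((symPart R).map Complex.ofReal).mulVec ξ ⬝ᵥ star ξ with hq
  set p : ℂ := ((antiPart R).map Complex.ofReal).mulVec ξ ⬝ᵥ star ξ with hp
  set w : ℂ := (B.map Complex.ofReal).mulVec ξ ⬝ᵥ star ξ with hw
  have hq_im : q.im = 0 := by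
    have := star_Q (symPart R) ξ
    rw [hRsT] at this
    have h := congrArg Complex.im this
    simp [Complex.star_def] at h
    linarith
  have hp_re : p.re = 0 := by
    have := star_Q (antiPart R) ξ
    rw [hRaT] at this
    have hneg : ((-antiPart R).map Complex.ofReal).mulVec ξ ⬝ᵥ star ξ = -p := by
      have : ((-antiPart R).map Complex.ofReal) = -((antiPart R).map Complex.ofReal) := by
        ext k l; simp [Matrix.map_apply, Matrix.neg_apply]
      rw [this, Matrix.neg_mulVec, neg_dotProduct]
    rw [hneg] at this
    have h := congrArg Complex.re this
    simp [Complex.star_def] at h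
    linarith
  have hw_im : w.im = 0 := by
    have := star_Q B ξ
    rw [hBT] at this
    have h := congrArg Complex.im this
    simp [Complex.star_def] at h
    linarith
  -- decomposition of C
  have hCmat : C = (symPart R).map Complex.ofReal + (antiPart R).map Complex.ofReal
      + Complex.I • (B.map Complex.ofReal) := by
    ext k l
    simp [Matrix.add_apply, Matrix.smul_apply, Matrix.map_apply, hRB, symPart, antiPart,
      Matrix.smul_apply, Matrix.add_apply, Matrix.sub_apply, Matrix.transpose_apply]
    push_cast
    ring
  have hQC : ∀ η : Fin d → ℂ, C.mulVec η ⬝ᵥ star η =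
      ((symPart R).map Complex.ofReal).mulVec η ⬝ᵥ star η
      + ((antiPart R).map Complex.ofReal).mulVec η ⬝ᵥ star η
      + Complex.I * ((B.map Complex.ofReal).mulVec η ⬝ᵥ star η) := by
    intro η
    rw [hCmat]
    simp [Matrix.add_mulVec, Matrix.smul_mulVec, add_dotProduct, smul_dotProduct,
      smul_eq_mul]
  have h1 := sector_bounds hθ (hsec ξ)
  rw [hQC ξ] at h1
  have h2 := sector_bounds hθ (hsec (star ξ))
  rw [hQC (star ξ), Q_starVec (symPart R) ξ, Q_starVec (antiPart R) ξ, Q_starVec B ξ] at h2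
  rw [← hq, ← hp, ← hw] at h1 h2
  simp only [Complex.add_re, Complex.add_im, Complex.mul_re, Complex.mul_im,
    Complex.I_re, Complex.I_im, Complex.star_def, Complex.conj_re, Complex.conj_im,
    hq_im, hp_re, hw_im] at h1 h2
  -- h1 : 0 ≤ q.re + (p.im + w.re)-type; normalize
  obtain ⟨h1a, h1b⟩ := h1
  obtain ⟨h2a, h2b⟩ := h2
  have htq : 0 ≤ Real.tan θ * q.re := le_trans (abs_nonneg _) (by rw [show Real.tan θ * q.re = Real.tan θ * (q.re + 0 + (0 * w.re - 1 * 0)) by ring]; exact h1b)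
  have hb1 := abs_le.mp h1b
  have hb2 := abs_le.mp h2b
  refine ⟨hq_im, ?_, ?_, ?_⟩
  · -- 0 ≤ q.re
    simpa using h1a
  · -- (b)
    intro s hs
    have hmat : ((Real.tan θ • symPart R + s • symPart B).map Complex.ofReal).mulVec ξ ⬝ᵥ star ξ
        = (Real.tan θ : ℂ) * q + (s : ℂ) * w := by
      have : ((Real.tan θ • symPart R + s • symPart B).map Complex.ofReal)
          = (Real.tan θ : ℂ) • ((symPart R).map Complex.ofReal)
            + (s : ℂ) • (B.map Complex.ofReal) := by
        ext k l
        simp [Matrix.map_apply, Matrix.add_apply, Matrix.smul_apply, hBs, smul_eq_mul]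
      rw [this, Matrix.add_mulVec, Matrix.smul_mulVec, Matrix.smul_mulVec,
        add_dotProduct, smul_dotProduct, smul_dotProduct, smul_eq_mul, smul_eq_mul, ← hq, ← hw]
    rw [hmat]
    constructor
    · simp [Complex.add_im, Complex.mul_im, Complex.ofReal_re, Complex.ofReal_im, hq_im, hw_im]
    · simp only [Complex.add_re, Complex.mul_re, Complex.ofReal_re, Complex.ofReal_im,
        hq_im, hw_im]
      rcases hs with rfl | rfl <;> [skip; skip] <;> nlinarith [hb1.1, hb1.2, hb2.1, hb2.2]
  · -- (c)
    intro s hs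
    have hmat : ((2 * Real.tan θ) • ((symPart R).map Complex.ofReal)
        + (s : ℂ) • Complex.I • ((antiPart R).map Complex.ofReal)).mulVec ξ ⬝ᵥ star ξ
        = ((2 * Real.tan θ : ℝ) : ℂ) * q + (s : ℂ) * (Complex.I * p) := by
      rw [Matrix.add_mulVec, Matrix.smul_mulVec, Matrix.smul_mulVec,
        Matrix.smul_mulVec, add_dotProduct, smul_dotProduct, smul_dotProduct,
        smul_dotProduct, ← hq, ← hp]
      simp [smul_eq_mul, Complex.real_smul]
    rw [hmat]
    constructor
    · simp [Complex.add_im, Complex.mul_im, Complex.mul_re, Complex.ofReal_re,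
        Complex.ofReal_im, Complex.I_re, Complex.I_im, hq_im, hp_re]
    · simp only [Complex.add_re, Complex.mul_re, Complex.mul_im, Complex.ofReal_re,
        Complex.ofReal_im, Complex.I_re, Complex.I_im, hq_im, hp_re]
      rcases hs with rfl | rfl <;> nlinarith [hb1.1, hb1.2, hb2.1, hb2.2]
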